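/- Let A be an n×n matrix that is SSR_{n−1} (all minors of order at most n−1 are nonzero with a common sign per order), let v = (α_1, −α_2, …, (−1)^{n−1} α_n)^T with all α_j ≥ 0, v ≠ 0, and x := adj(A)·v. If S^+(Ax) ≤ S^-(x), then det(A) ≠ 0. -/

import Mathlib

open Matrix Filter

/-- Number of sign changes in a list of reals (consecutive pairs with negative product). -/
noncomputable def signChanges (l : List ℝ) : ℕ :=
  (l.zip l.tail).countP (fun p => decide (p.1 * p.2 < 0))

/-- `S^-(v)`: sign changes of the coordinates of `v` after discarding zero entries. -/
noncomputable def Sm {n : ℕ} (v : Fin n → ℝ) : ℕ :=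
  signChanges ((List.ofFn v).filter (fun x => decide (x ≠ 0)))

/-- `S^+(v)`: maximal number of sign changes over all ±1 completions of the zero
entries of `v`, with the convention `S^+(0) = n`. -/
noncomputable def Sp {n : ℕ} (v : Fin n → ℝ) : ℕ :=
  if v = 0 then n
  else Finset.univ.sup (fun σ : Fin n → Bool =>
    signChanges (List.ofFn (fun i => if v i = 0 then (if σ i then (1:ℝ) else -1) else v i)))

/-- First nonzero entry of a vector (`0` if the vector is zero). -/
noncomputable def firstNz {n : ℕ} (v : Fin n → ℝ) : ℝ :=
  ((List.ofFn v).filter (fun x => decide (x ≠ 0))).headI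

/-- `A` is strictly sign regular with sign pattern `ε`:
every `r × r` minor (`1 ≤ r ≤ min m n`) is nonzero with sign `ε r`. -/
def ssrPattern {m n : ℕ} (A : Matrix (Fin m) (Fin n) ℝ) (ε : ℕ → ℝ) : Prop :=
  ∀ r : ℕ, 1 ≤ r → r ≤ min m n → ∀ (f : Fin r → Fin m) (g : Fin r → Fin n),
    StrictMono f → StrictMono g → 0 < ε r * (A.submatrix f g).det

/-- `A` is sign regular with sign pattern `ε`:
every nonzero `r × r` minor (`1 ≤ r ≤ min m n`) has sign `ε r`. -/
def srPattern {m n : ℕ} (A : Matrix (Fin m) (Fin n) ℝ) (ε : ℕ → ℝ) : Prop :=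
  ∀ r : ℕ, 1 ≤ r → r ≤ min m n → ∀ (f : Fin r → Fin m) (g : Fin r → Fin n),
    StrictMono f → StrictMono g → 0 ≤ ε r * (A.submatrix f g).det

/-- The map `f` picks out consecutive indices. -/
def Contig {r m : ℕ} (f : Fin r → Fin m) : Prop :=
  ∃ a : ℕ, ∀ i : Fin r, (f i : ℕ) = a + (i : ℕ)

theorem stmt9 {n : ℕ} (hn : 1 ≤ n) (A : Matrix (Fin n) (Fin n) ℝ) (ε : ℕ → ℝ)
    (hsv : ∀ p, ε p = 1 ∨ ε p = -1)
    (hA : ∀ p : ℕ, 1 ≤ p → p ≤ n - 1 → ∀ (f g : Fin p → Fin n),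
      StrictMono f → StrictMono g → 0 < ε p * (A.submatrix f g).det)
    (α : Fin n → ℝ) (hα : ∀ j, 0 ≤ α j)
    (v : Fin n → ℝ) (hv : ∀ j, v j = (-1 : ℝ) ^ (j : ℕ) * α j) (hv0 : v ≠ 0)
    (x : Fin n → ℝ) (hx : x = A.adjugate *ᵥ v)
    (hVD : Sp (A *ᵥ x) ≤ Sm x) :
    A.det ≠ 0 := by
  intro hdet
  have hAx : A *ᵥ x = 0 := by
    rw [hx, mulVec_mulVec, Matrix.mul_adjugate, hdet]
    ext i
    simp [Matrix.smul_mulVec]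
  have h1 : Sp (A *ᵥ x) = n := by rw [hAx]; simp [Sp]
  have h2 : Sm x < n := by
    have hlen : ((List.ofFn x).filter (fun y => decide (y ≠ 0))).length ≤ n := by
      calc ((List.ofFn x).filter (fun y => decide (y ≠ 0))).length
          ≤ (List.ofFn x).length := List.length_filter_le _ _
        _ = n := List.length_ofFn
    set l := (List.ofFn x).filter (fun y => decide (y ≠ 0)) with hl
    have : Sm x ≤ (l.zip l.tail).length := List.countP_le_length
    have hzl : (l.zip l.tail).length = min l.length l.tail.length := List.length_zip
    rcases Nat.eq_zero_or_pos l.length with h0 | hpos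
    · have : Sm x ≤ 0 := by
        simpa [hzl, List.length_tail, h0] using this
      omega
    · have htail : l.tail.length = l.length - 1 := List.length_tail
      have : Sm x ≤ l.length - 1 := by
        calc Sm x ≤ (l.zip l.tail).length := this
          _ = min l.length (l.length - 1) := by rw [hzl, htail]
          _ ≤ l.length - 1 := min_le_right _ _
      omega
  omega
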